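/- Consider an n-player tournament (n ≥ 2) with chip fractions x₁, …, x_n > 0 summing to 1 and prize money m₁ ≥ m₂ ≥ ⋯ ≥ m_n with m₂ > m_n. Suppose player 1 makes a fair bet with player 2: let W be a real random variable taking finitely many values, with E[W] = 0, P(W = 0) < 1, and −x₂ < W < x₁ almost surely, after which player 1 holds x₁ − W, player 2 holds x₂ + W, and all other stacks are unchanged. Then player 1's ICM expected prize money strictly decreases: E[EV₁(x₁ − W, x₂ + W, x₃, …, x_n)] < EV₁(x₁, …, x_n). -/

import Mathlib

open MeasureTheory
open scoped ProbabilityTheory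

/-- ICM probability that given players holding chip fractions `l = [x₁, …, x_k]`
finish 1st through kth in that order. -/
noncomputable def icmP (l : List ℝ) : ℝ :=
  l.prod / ∏ i ∈ Finset.range (l.length - 1), (1 - ((l.take (i + 1)).sum))

/-- ICM expected prize money of player `i` in an `n`-player tournament with
prizes `m₁, …, m_n` and chip fractions `x₁, …, x_n`:
`EV_i(x) = Σ_{σ ∈ S_n} m_{σ⁻¹(i)} · p_n(x_{σ(1)}, …, x_{σ(n)})`. -/
noncomputable def icmEV {n : ℕ} (m : Fin n → ℝ) (x : Fin n → ℝ) (i : Fin n) : ℝ :=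
  ∑ σ : Equiv.Perm (Fin n), m (σ.symm i) * icmP (List.ofFn fun j => x (σ j))


section ICMAux
open Finset

open Finset

/-- Product form of the ICM order probability, using local suffix sums. -/
noncomputable def ordL : List ℝ → ℝ
  | [] => 1
  | a :: l => (a / (a + l.sum)) * ordL l

@[simp] lemma ordL_nil : ordL [] = 1 := rfl

lemma ordL_cons (a : ℝ) (l : List ℝ) : ordL (a :: l) = (a / (a + l.sum)) * ordL l := rfl

lemma ordL_nonneg {l : List ℝ} (h : ∀ x ∈ l, 0 ≤ x) : 0 ≤ ordL l := by
  induction l with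
  | nil => norm_num
  | cons a l ih =>
      rw [ordL_cons]
      have ha : 0 ≤ a := h a (by simp)
      have hs : 0 ≤ l.sum := List.sum_nonneg (fun x hx => h x (by simp [hx]))
      have := ih (fun x hx => h x (by simp [hx]))
      positivity

lemma ordL_pos {l : List ℝ} (h : ∀ x ∈ l, 0 < x) : 0 < ordL l := by
  induction l with
  | nil => norm_num
  | cons a l ih =>
      rw [ordL_cons]
      have ha : 0 < a := h a (by simp)
      have hs : 0 ≤ l.sum := List.sum_nonneg (fun x hx => (h x (by simp [hx])).le)
      have := ih (fun x hx => h x (by simp [hx]))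
      positivity

lemma drop_sum_pos {l : List ℝ} (h : ∀ x ∈ l, 0 < x) {i : ℕ} (hi : i < l.length) :
    0 < (l.drop i).sum := by
  have hne : l.drop i ≠ [] := by
    refine List.ne_nil_of_length_pos ?_
    rw [List.length_drop]; omega
  rcases List.exists_cons_of_ne_nil hne with ⟨y, ys, hys⟩
  have hy : 0 < y := h y (List.mem_of_mem_drop (by rw [hys]; simp))
  have hys' : 0 ≤ ys.sum := List.sum_nonneg fun x hx => by
    have hxd : x ∈ l.drop i := by rw [hys]; exact List.mem_cons_of_mem y hx
    exact (h x (List.mem_of_mem_drop hxd)).le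
  rw [hys]; simp; linarith

/-- `ordL` as an explicit quotient of products over suffix sums. -/
lemma ordL_eq_prod {l : List ℝ} (h : ∀ x ∈ l, 0 < x) :
    ordL l = l.prod / ∏ i ∈ Finset.range l.length, ((l.drop i).sum) := by
  induction l with
  | nil => simp
  | cons a l ih =>
      rw [ordL_cons, ih (fun x hx => h x (by simp [hx]))]
      have hsplit : ∏ i ∈ Finset.range (l.length + 1), (((a :: l).drop i).sum)
          = (∏ i ∈ Finset.range l.length, ((l.drop i).sum)) * (a + l.sum) := by
        rw [Finset.prod_range_succ']
        simp [List.sum_cons]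
      have hlen : (a :: l).length = l.length + 1 := rfl
      rw [hlen, hsplit]
      have ha : 0 < a := h a (by simp)
      have hls : 0 ≤ l.sum := List.sum_nonneg (fun x hx => (h x (by simp [hx])).le)
      have hP : 0 < ∏ i ∈ Finset.range l.length, ((l.drop i).sum) :=
        Finset.prod_pos fun i hi => drop_sum_pos (fun x hx => h x (by simp [hx]))
          (Finset.mem_range.mp hi)
      rw [List.prod_cons, div_mul_div_comm]
      ring_nf
lemma icmP_eq_ordL {l : List ℝ} (h : ∀ x ∈ l, 0 < x) (hsum : l.sum = 1) :
    icmP l = ordL l := by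
  have hlen : l.length ≠ 0 := by
    intro h0
    rw [List.length_eq_zero_iff] at h0
    rw [h0] at hsum; simp at hsum
  rw [icmP, ordL_eq_prod h]
  have htake : ∀ i ∈ Finset.range (l.length - 1), (1 - ((l.take (i + 1)).sum)) = (l.drop (i+1)).sum := by
    intro i _
    have := List.sum_take_add_sum_drop l (i + 1)
    rw [hsum] at this
    linarith
  rw [Finset.prod_congr rfl htake]
  obtain ⟨k, hk⟩ : ∃ k, l.length = k + 1 := ⟨l.length - 1, by omega⟩
  rw [hk]
  rw [Finset.prod_range_succ']
  simp only [List.drop_zero, hsum]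
  simp [hk]
/-- swap-based removal of index `p` from `Fin (k+1)`. -/
lemma swap_zero_sum {k : ℕ} (y : Fin (k+1) → ℝ) (p : Fin (k+1)) :
    ∑ i, y i = y p + ∑ j : Fin k, y (Equiv.swap 0 p j.succ) := by
  rw [← Equiv.sum_comp (Equiv.swap 0 p) y, Fin.sum_univ_succ, Equiv.swap_apply_left]

lemma ofFn_decompose {k : ℕ} (y : Fin (k+1) → ℝ) (p : Fin (k+1)) (τ : Equiv.Perm (Fin k)) :
    (List.ofFn fun j => y ((Equiv.Perm.decomposeFin.symm (p, τ)) j))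
      = y p :: (List.ofFn fun j => (fun i : Fin k => y (Equiv.swap 0 p i.succ)) (τ j)) := by
  rw [List.ofFn_succ]
  congr 1
  · rw [Equiv.Perm.decomposeFin_symm_apply_zero]
  · exact congrArg List.ofFn (funext fun j => by
      simp [Equiv.Perm.decomposeFin_symm_apply_succ])

/-- Normalization: the ICM order probabilities sum to 1. -/
lemma sum_perm_ordL : ∀ {k : ℕ} (y : Fin k → ℝ), (∀ i, 0 < y i) →
    ∑ σ : Equiv.Perm (Fin k), ordL (List.ofFn fun j => y (σ j)) = 1 := by
  intro k
  induction k with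
  | zero => intro y hy; simp [ordL]
  | succ k ih =>
      intro y hy
      rw [← Equiv.sum_comp Equiv.Perm.decomposeFin.symm
        (fun σ => ordL (List.ofFn fun j => y (σ j))), Fintype.sum_prod_type]
      have hstep : ∀ p : Fin (k+1),
          ∑ τ : Equiv.Perm (Fin k),
            ordL (List.ofFn fun j => y ((Equiv.Perm.decomposeFin.symm (p, τ)) j))
          = y p / ∑ i, y i := by
        intro p
        have hy' : ∀ i : Fin k, 0 < y (Equiv.swap 0 p i.succ) := fun i => hy _
        calc ∑ τ : Equiv.Perm (Fin k),
              ordL (List.ofFn fun j => y ((Equiv.Perm.decomposeFin.symm (p, τ)) j))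
            = ∑ τ : Equiv.Perm (Fin k),
              (y p / ∑ i, y i) *
                ordL (List.ofFn fun j => (fun i : Fin k => y (Equiv.swap 0 p i.succ)) (τ j)) := by
              refine Finset.sum_congr rfl fun τ _ => ?_
              rw [ofFn_decompose, ordL_cons, List.sum_ofFn,
                Equiv.sum_comp τ (fun i : Fin k => y (Equiv.swap 0 p i.succ)),
                ← swap_zero_sum y p]
          _ = y p / ∑ i, y i := by
              rw [← Finset.mul_sum, ih _ hy', mul_one]
      rw [Finset.sum_congr rfl fun p _ => hstep p, ← Finset.sum_div]
      have : 0 < ∑ i, y i := Finset.sum_pos (fun i _ => hy i) ⟨0, Finset.mem_univ 0⟩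
      field_simp

/-- Sum of ICM order probabilities over all orders in which player `a`
finishes in place `t` (0-based) or later; weights are affine in `w`. -/
noncomputable def permS (k t : ℕ) (a : Fin k) (c e : Fin k → ℝ) (w : ℝ) : ℝ :=
  ∑ σ ∈ Finset.univ.filter (fun σ : Equiv.Perm (Fin k) => t ≤ ((σ.symm a : Fin k) : ℕ)),
    ordL (List.ofFn fun j => c (σ j) + e (σ j) * w)

lemma permS_zero {k : ℕ} (a : Fin k) (c e : Fin k → ℝ) (w : ℝ)
    (hpos : ∀ i, 0 < c i + e i * w) :
    permS k 0 a c e w = 1 := by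
  rw [permS]
  rw [Finset.filter_true_of_mem (fun σ _ => Nat.zero_le _)]
  exact sum_perm_ordL (fun i => c i + e i * w) hpos

lemma swap_pred_ne {k : ℕ} {p a : Fin (k+1)} (h : p ≠ a) : Equiv.swap 0 p a ≠ 0 := by
  intro h0
  apply h
  have := congrArg (Equiv.swap 0 p) h0
  rwa [Equiv.swap_apply_self, Equiv.swap_apply_left, eq_comm] at this

lemma permS_succ {k t : ℕ} (a : Fin (k+1)) (c e : Fin (k+1) → ℝ) (w : ℝ) :
    permS (k+1) (t+1) a c e w
    = ∑ p : Fin (k+1), if h : p = a then 0 else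
        ((c p + e p * w) / (∑ i, (c i + e i * w))) *
          permS k t ((Equiv.swap 0 p a).pred (swap_pred_ne h))
            (fun j => c (Equiv.swap 0 p j.succ))
            (fun j => e (Equiv.swap 0 p j.succ)) w := by
  rw [permS, Finset.sum_filter,
    ← Equiv.sum_comp Equiv.Perm.decomposeFin.symm
      (fun σ : Equiv.Perm (Fin (k+1)) => if t+1 ≤ ((σ.symm a : Fin (k+1)) : ℕ) then
        ordL (List.ofFn fun j => c (σ j) + e (σ j) * w) else 0),
    Fintype.sum_prod_type]
  refine Finset.sum_congr rfl fun p _ => ?_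
  by_cases h : p = a
  · subst h
    rw [dif_pos rfl]
    refine Finset.sum_eq_zero fun τ _ => ?_
    have hsymm : (Equiv.Perm.decomposeFin.symm (p, τ)).symm p = 0 := by
      rw [Equiv.symm_apply_eq, Equiv.Perm.decomposeFin_symm_apply_zero]
    rw [hsymm]
    simp
  · rw [dif_neg h]
    set b : Fin k := (Equiv.swap 0 p a).pred (swap_pred_ne h) with hb
    have hsymm : ∀ τ : Equiv.Perm (Fin k),
        (Equiv.Perm.decomposeFin.symm (p, τ)).symm a = (τ.symm b).succ := by
      intro τ
      rw [Equiv.symm_apply_eq, Equiv.Perm.decomposeFin_symm_apply_succ,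
        Equiv.apply_symm_apply, hb, Fin.succ_pred, Equiv.swap_apply_self]
    have key : ∀ τ : Equiv.Perm (Fin k),
        (if t+1 ≤ (((Equiv.Perm.decomposeFin.symm (p, τ)).symm a : Fin (k+1)) : ℕ) then
          ordL (List.ofFn fun j => c ((Equiv.Perm.decomposeFin.symm (p, τ)) j)
              + e ((Equiv.Perm.decomposeFin.symm (p, τ)) j) * w) else 0)
        = ((c p + e p * w) / (∑ i, (c i + e i * w))) *
            (if t ≤ ((τ.symm b : Fin k) : ℕ) then
              ordL (List.ofFn fun j =>
                (c (Equiv.swap 0 p (τ j).succ) + e (Equiv.swap 0 p (τ j).succ) * w)) else 0) := by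
      intro τ
      rw [hsymm τ]
      have hcond : (t+1 ≤ (((τ.symm b).succ : Fin (k+1)) : ℕ)) ↔ (t ≤ ((τ.symm b : Fin k) : ℕ)) := by
        rw [Fin.val_succ]; omega
      by_cases hc : t ≤ ((τ.symm b : Fin k) : ℕ)
      · rw [if_pos (hcond.mpr hc), if_pos hc]
        have := ofFn_decompose (fun i => c i + e i * w) p τ
        rw [this, ordL_cons, List.sum_ofFn,
          Equiv.sum_comp τ (fun i : Fin k => c (Equiv.swap 0 p i.succ) + e (Equiv.swap 0 p i.succ) * w),
          ← swap_zero_sum (fun i => c i + e i * w) p]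
      · rw [if_neg (fun hh => hc (hcond.mp hh)), if_neg hc, mul_zero]
    rw [Finset.sum_congr rfl fun τ _ => key τ, ← Finset.mul_sum]
    congr 1
    rw [permS, Finset.sum_filter]

variable {s : Set ℝ}

lemma convexOn_inv' : ConvexOn ℝ (Set.Ioi (0:ℝ)) (fun x : ℝ => x⁻¹) := by
  have := convexOn_zpow (𝕜 := ℝ) (-1)
  simpa using this

lemma strictConvexOn_inv' : StrictConvexOn ℝ (Set.Ioi (0:ℝ)) (fun x : ℝ => x⁻¹) := by
  have := strictConvexOn_zpow (m := -1) (by norm_num) (by norm_num)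
  simpa using this

lemma affine_convexOn (hs : Convex ℝ s) (c e : ℝ) : ConvexOn ℝ s (fun w => c + e * w) := by
  refine ⟨hs, fun x _ y _ a b ha hb hab => le_of_eq ?_⟩
  simp only [smul_eq_mul]
  linear_combination (-c) * hab

lemma affine_monotoneOn (c e : ℝ) (he : 0 ≤ e) : MonotoneOn (fun w => c + e * w) s :=
  fun x _ y _ hxy => by have := mul_le_mul_of_nonneg_left hxy he; simp only []; linarith

lemma inv_affine_monotoneOn {C E : ℝ} (hE : E ≤ 0) (hpos : ∀ w ∈ s, 0 < C + E * w) :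
    MonotoneOn (fun w => (C + E * w)⁻¹) s := by
  intro x hx y hy hxy
  have h1 : 0 < C + E * y := hpos y hy
  have h2 : C + E * y ≤ C + E * x := by nlinarith
  simp only []
  exact inv_anti₀ h1 h2

lemma comboaff {C E x y a b : ℝ} (hab : a + b = 1) :
    C + E * (a * x + b * y) = a * (C + E * x) + b * (C + E * y) := by
  linear_combination (-C) * hab

lemma inv_affine_convexOn (hs : Convex ℝ s) {C E : ℝ} (hpos : ∀ w ∈ s, 0 < C + E * w) :
    ConvexOn ℝ s (fun w => (C + E * w)⁻¹) := by
  refine ⟨hs, fun x hx y hy a b ha hb hab => ?_⟩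
  have hP : 0 < C + E * x := hpos x hx
  have hQ : 0 < C + E * y := hpos y hy
  simp only [smul_eq_mul]
  rw [comboaff hab]
  simpa [smul_eq_mul] using
    convexOn_inv'.2 (Set.mem_Ioi.mpr hP) (Set.mem_Ioi.mpr hQ) ha hb hab

lemma inv_affine_strictConvexOn (hs : Convex ℝ s) {C E : ℝ} (hE : E ≠ 0)
    (hpos : ∀ w ∈ s, 0 < C + E * w) :
    StrictConvexOn ℝ s (fun w => (C + E * w)⁻¹) := by
  refine ⟨hs, fun x hx y hy hxy a b ha hb hab => ?_⟩
  have hP : 0 < C + E * x := hpos x hx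
  have hQ : 0 < C + E * y := hpos y hy
  have hne : C + E * x ≠ C + E * y := by
    intro h; apply hxy; have h' : E * (x - y) = 0 := by linarith
    rcases mul_eq_zero.mp h' with h | h; exact absurd h hE; linarith
  simp only [smul_eq_mul]
  rw [comboaff hab]
  simpa [smul_eq_mul] using
    strictConvexOn_inv'.2 (Set.mem_Ioi.mpr hP) (Set.mem_Ioi.mpr hQ) hne ha hb hab

lemma monotoneOn_mul_nonneg {f g : ℝ → ℝ} (hf : MonotoneOn f s) (hg : MonotoneOn g s)
    (hf0 : ∀ w ∈ s, 0 ≤ f w) (hg0 : ∀ w ∈ s, 0 ≤ g w) :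
    MonotoneOn (fun w => f w * g w) s := fun x hx y hy hxy =>
  mul_le_mul (hf hx hy hxy) (hg hx hy hxy) (hg0 x hx) (hf0 y hy)

lemma convexOn_mul_nonneg {f g : ℝ → ℝ} (hs : Convex ℝ s)
    (hf : ConvexOn ℝ s f) (hg : ConvexOn ℝ s g)
    (hfm : MonotoneOn f s) (hgm : MonotoneOn g s)
    (hf0 : ∀ w ∈ s, 0 ≤ f w) (hg0 : ∀ w ∈ s, 0 ≤ g w) :
    ConvexOn ℝ s (fun w => f w * g w) := by
  refine ⟨hs, fun x hx y hy a b ha hb hab => ?_⟩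
  have hz : a • x + b • y ∈ s := hs hx hy ha hb hab
  have h1 : f (a • x + b • y) ≤ a * f x + b * f y := by
    simpa [smul_eq_mul] using hf.2 hx hy ha hb hab
  have h2 : g (a • x + b • y) ≤ a * g x + b * g y := by
    simpa [smul_eq_mul] using hg.2 hx hy ha hb hab
  have hmono : 0 ≤ (f x - f y) * (g x - g y) := by
    rcases le_total x y with h | h
    · have := hfm hx hy h; have := hgm hx hy h; nlinarith
    · have := hfm hy hx h; have := hgm hy hx h; nlinarith
  have hfz0 : 0 ≤ f (a • x + b • y) := hf0 _ hz
  have hgz0 : 0 ≤ g (a • x + b • y) := hg0 _ hz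
  have hcomb : 0 ≤ a * f x + b * f y := le_trans hfz0 h1
  simp only [smul_eq_mul]
  calc f (a • x + b • y) * g (a • x + b • y)
      ≤ (a * f x + b * f y) * (a * g x + b * g y) := by
        exact mul_le_mul h1 h2 hgz0 hcomb
    _ ≤ a * (f x * g x) + b * (f y * g y) := by
        have hid : a * (f x * g x) + b * (f y * g y) - (a * f x + b * f y) * (a * g x + b * g y)
            = a * b * ((f x - f y) * (g x - g y)) := by
          linear_combination (-(a * (f x * g x) + b * (f y * g y))) * hab
        nlinarith [mul_nonneg (mul_nonneg ha hb) hmono]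

lemma strictConvexOn_mul_nonneg {f g : ℝ → ℝ} (hs : Convex ℝ s)
    (hf : ConvexOn ℝ s f) (hg : ConvexOn ℝ s g)
    (hfm : MonotoneOn f s) (hgm : MonotoneOn g s)
    (hf0 : ∀ w ∈ s, 0 < f w) (hg0 : ∀ w ∈ s, 0 < g w)
    (hstrict : StrictConvexOn ℝ s f ∨ StrictConvexOn ℝ s g) :
    StrictConvexOn ℝ s (fun w => f w * g w) := by
  refine ⟨hs, fun x hx y hy hxy a b ha hb hab => ?_⟩
  have hz : a • x + b • y ∈ s := hs hx hy ha.le hb.le hab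
  have h1 : f (a • x + b • y) ≤ a * f x + b * f y := by
    simpa [smul_eq_mul] using hf.2 hx hy ha.le hb.le hab
  have h2 : g (a • x + b • y) ≤ a * g x + b * g y := by
    simpa [smul_eq_mul] using hg.2 hx hy ha.le hb.le hab
  have hmono : 0 ≤ (f x - f y) * (g x - g y) := by
    rcases le_total x y with h | h
    · have := hfm hx hy h; have := hgm hx hy h; nlinarith
    · have := hfm hy hx h; have := hgm hy hx h; nlinarith
  have hfz0 : 0 < f (a • x + b • y) := hf0 _ hz
  have hgz0 : 0 < g (a • x + b • y) := hg0 _ hz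
  have key : f (a • x + b • y) * g (a • x + b • y)
      < (a * f x + b * f y) * (a * g x + b * g y) := by
    rcases hstrict with hsf | hsg
    · have h1' : f (a • x + b • y) < a * f x + b * f y := by
        simpa [smul_eq_mul] using hsf.2 hx hy hxy ha hb hab
      calc f (a • x + b • y) * g (a • x + b • y)
          < (a * f x + b * f y) * g (a • x + b • y) :=
            mul_lt_mul_of_pos_right h1' hgz0
        _ ≤ (a * f x + b * f y) * (a * g x + b * g y) :=
            mul_le_mul_of_nonneg_left h2 (le_trans hfz0.le h1'.le)
    · have h2' : g (a • x + b • y) < a * g x + b * g y := by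
        simpa [smul_eq_mul] using hsg.2 hx hy hxy ha hb hab
      calc f (a • x + b • y) * g (a • x + b • y)
          < f (a • x + b • y) * (a * g x + b * g y) :=
            mul_lt_mul_of_pos_left h2' hfz0
        _ ≤ (a * f x + b * f y) * (a * g x + b * g y) :=
            mul_le_mul_of_nonneg_right h1 (le_trans hgz0.le h2'.le)
  simp only [smul_eq_mul]
  calc f (a • x + b • y) * g (a • x + b • y)
      < (a * f x + b * f y) * (a * g x + b * g y) := key
    _ ≤ a * (f x * g x) + b * (f y * g y) := by
        have hid : a * (f x * g x) + b * (f y * g y) - (a * f x + b * f y) * (a * g x + b * g y)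
            = a * b * ((f x - f y) * (g x - g y)) := by
          linear_combination (-(a * (f x * g x) + b * (f y * g y))) * hab
        nlinarith [mul_nonneg (mul_nonneg ha.le hb.le) hmono]

lemma convexOn_finset_sum {ι : Type*} (t : Finset ι) {f : ι → ℝ → ℝ} (hs : Convex ℝ s)
    (h : ∀ i ∈ t, ConvexOn ℝ s (f i)) : ConvexOn ℝ s (fun w => ∑ i ∈ t, f i w) := by
  classical
  induction t using Finset.induction with
  | empty => simpa using convexOn_const (0:ℝ) hs
  | insert _ _ hnotmem ih =>
      rename_i a t
      simp only [Finset.sum_insert hnotmem]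
      exact (h a (Finset.mem_insert_self a t)).add
        (ih (fun i hi => h i (Finset.mem_insert_of_mem hi)))

lemma monotoneOn_finset_sum {ι : Type*} (t : Finset ι) {f : ι → ℝ → ℝ}
    (h : ∀ i ∈ t, MonotoneOn (f i) s) : MonotoneOn (fun w => ∑ i ∈ t, f i w) s := by
  intro x hx y hy hxy
  exact Finset.sum_le_sum fun i hi => h i hi hx hy hxy

lemma strictConvexOn_smul_pos {f : ℝ → ℝ} {c : ℝ} (hc : 0 < c) (hf : StrictConvexOn ℝ s f) :
    StrictConvexOn ℝ s (fun w => c * f w) := by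
  refine ⟨hf.1, fun x hx y hy hxy a b ha hb hab => ?_⟩
  have := hf.2 hx hy hxy ha hb hab
  simp only [smul_eq_mul] at *
  nlinarith

lemma concaveOn_finset_sum {ι : Type*} (t : Finset ι) {f : ι → ℝ → ℝ} (hs : Convex ℝ s)
    (h : ∀ i ∈ t, ConcaveOn ℝ s (f i)) : ConcaveOn ℝ s (fun w => ∑ i ∈ t, f i w) := by
  classical
  induction t using Finset.induction with
  | empty => simpa using concaveOn_const (0:ℝ) hs
  | insert _ _ hnotmem ih =>
      rename_i a t
      simp only [Finset.sum_insert hnotmem]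
      exact (h a (Finset.mem_insert_self a t)).add
        (ih (fun i hi => h i (Finset.mem_insert_of_mem hi)))
section PermSProps

variable {s : Set ℝ}

lemma convexOn_congr' {f g : ℝ → ℝ} (h : ConvexOn ℝ s f) (heq : ∀ w ∈ s, f w = g w) :
    ConvexOn ℝ s g := by
  refine ⟨h.1, fun x hx y hy a b ha hb hab => ?_⟩
  rw [← heq x hx, ← heq y hy, ← heq _ (h.1 hx hy ha hb hab)]
  exact h.2 hx hy ha hb hab

lemma strictConvexOn_congr' {f g : ℝ → ℝ} (h : StrictConvexOn ℝ s f)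
    (heq : ∀ w ∈ s, f w = g w) : StrictConvexOn ℝ s g := by
  refine ⟨h.1, fun x hx y hy hxy a b ha hb hab => ?_⟩
  rw [← heq x hx, ← heq y hy, ← heq _ (h.1 hx hy ha.le hb.le hab)]
  exact h.2 hx hy hxy ha hb hab

lemma monotoneOn_congr' {f g : ℝ → ℝ} (h : MonotoneOn f s) (heq : ∀ w ∈ s, f w = g w) :
    MonotoneOn g s := fun x hx y hy hxy => by
  rw [← heq x hx, ← heq y hy]; exact h hx hy hxy

/-- The summand in the recursion for `permS`. -/
noncomputable def termF (k t : ℕ) (a : Fin (k+1)) (c e : Fin (k+1) → ℝ) (p : Fin (k+1))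
    (w : ℝ) : ℝ :=
  if h : p = a then 0 else
    ((c p + e p * w) / (∑ i, (c i + e i * w))) *
      permS k t ((Equiv.swap 0 p a).pred (swap_pred_ne h))
        (fun j => c (Equiv.swap 0 p j.succ))
        (fun j => e (Equiv.swap 0 p j.succ)) w

lemma permS_succ' {k t : ℕ} (a : Fin (k+1)) (c e : Fin (k+1) → ℝ) (w : ℝ) :
    permS (k+1) (t+1) a c e w = ∑ p : Fin (k+1), termF k t a c e p w :=
  permS_succ a c e w

lemma permS_nonneg {k t : ℕ} (a : Fin k) (c e : Fin k → ℝ) {w : ℝ}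
    (hpos : ∀ i, 0 < c i + e i * w) : 0 ≤ permS k t a c e w := by
  refine Finset.sum_nonneg fun σ _ => ordL_nonneg fun x hx => ?_
  rw [List.mem_ofFn] at hx
  obtain ⟨j, rfl⟩ := hx
  exact (hpos _).le

/-- Transfer of the structural hypotheses to the reduced system after removing player `p`. -/
lemma sub_hyps {k : ℕ} {c e : Fin (k+1) → ℝ} {a p : Fin (k+1)} (hp : p ≠ a)
    (hpos : ∀ w ∈ s, ∀ i, 0 < c i + e i * w)
    (he : ∀ i, i ≠ a → 0 ≤ e i) (hE : ∑ i, e i ≤ 0) :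
    (∀ w ∈ s, ∀ j : Fin k, 0 < c (Equiv.swap 0 p j.succ) + e (Equiv.swap 0 p j.succ) * w)
    ∧ (∀ j : Fin k, j ≠ (Equiv.swap 0 p a).pred (swap_pred_ne hp) →
        0 ≤ e (Equiv.swap 0 p j.succ))
    ∧ (∑ j : Fin k, e (Equiv.swap 0 p j.succ) ≤ 0) := by
  refine ⟨fun w hw j => hpos w hw _, fun j hj => ?_, ?_⟩
  · refine he _ fun hc => hj ?_
    have : j.succ = Equiv.swap 0 p a := by
      have := congrArg (Equiv.swap 0 p) hc
      rwa [Equiv.swap_apply_self] at this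
    refine Fin.succ_injective _ ?_
    rw [Fin.succ_pred]
    exact this
  · have hsum := swap_zero_sum e p
    have hep : 0 ≤ e p := he p hp
    linarith

lemma termF_props (hs : Convex ℝ s) {k t : ℕ}
    (ih : ∀ (k : ℕ) (a : Fin k) (c e : Fin k → ℝ),
      (∀ w ∈ s, ∀ i, 0 < c i + e i * w) →
      (∀ i, i ≠ a → 0 ≤ e i) → (∑ i, e i ≤ 0) →
      ConvexOn ℝ s (fun w => permS k t a c e w) ∧
        MonotoneOn (fun w => permS k t a c e w) s)
    (a : Fin (k+1)) (c e : Fin (k+1) → ℝ) (p : Fin (k+1))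
    (hpos : ∀ w ∈ s, ∀ i, 0 < c i + e i * w)
    (he : ∀ i, i ≠ a → 0 ≤ e i) (hE : ∑ i, e i ≤ 0) :
    ConvexOn ℝ s (fun w => termF k t a c e p w) ∧
      MonotoneOn (fun w => termF k t a c e p w) s ∧
      ∀ w ∈ s, 0 ≤ termF k t a c e p w := by
  by_cases hp : p = a
  · simp only [termF, dif_pos hp]
    exact ⟨convexOn_const 0 hs, fun x _ y _ _ => le_refl 0, fun w _ => le_refl 0⟩
  · simp only [termF, dif_neg hp]
    obtain ⟨hpos', he', hE'⟩ := sub_hyps (s := s) hp hpos he hE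
    obtain ⟨hconv', hmono'⟩ := ih k ((Equiv.swap 0 p a).pred (swap_pred_ne hp))
      (fun j => c (Equiv.swap 0 p j.succ)) (fun j => e (Equiv.swap 0 p j.succ))
      hpos' he' hE'
    have hsum_eq : ∀ w : ℝ, ∑ i, (c i + e i * w) = (∑ i, c i) + (∑ i, e i) * w := by
      intro w; rw [Finset.sum_add_distrib, ← Finset.sum_mul]
    have hden_pos : ∀ w ∈ s, 0 < (∑ i, c i) + (∑ i, e i) * w := by
      intro w hw
      rw [← hsum_eq w]
      exact Finset.sum_pos (fun i _ => hpos w hw i) ⟨0, Finset.mem_univ 0⟩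
    have hfac_eq : ∀ w : ℝ, (c p + e p * w) / (∑ i, (c i + e i * w))
        = (c p + e p * w) * (((∑ i, c i) + (∑ i, e i) * w)⁻¹) := by
      intro w; rw [hsum_eq w, div_eq_mul_inv]
    have hnum_pos : ∀ w ∈ s, 0 < c p + e p * w := fun w hw => hpos w hw p
    have hnum_mono : MonotoneOn (fun w => c p + e p * w) s := affine_monotoneOn _ _ (he p hp)
    have hnum_conv : ConvexOn ℝ s (fun w => c p + e p * w) := affine_convexOn hs _ _
    have hinv_mono : MonotoneOn (fun w => (((∑ i, c i) + (∑ i, e i) * w)⁻¹)) s :=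
      inv_affine_monotoneOn hE hden_pos
    have hinv_conv : ConvexOn ℝ s (fun w => (((∑ i, c i) + (∑ i, e i) * w)⁻¹)) :=
      inv_affine_convexOn hs hden_pos
    have hfac_conv : ConvexOn ℝ s (fun w => (c p + e p * w) * (((∑ i, c i) + (∑ i, e i) * w)⁻¹)) :=
      convexOn_mul_nonneg hs hnum_conv hinv_conv hnum_mono hinv_mono
        (fun w hw => (hnum_pos w hw).le) (fun w hw => (inv_pos.mpr (hden_pos w hw)).le)
    have hfac_mono : MonotoneOn (fun w => (c p + e p * w) * (((∑ i, c i) + (∑ i, e i) * w)⁻¹)) s :=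
      monotoneOn_mul_nonneg hnum_mono hinv_mono
        (fun w hw => (hnum_pos w hw).le) (fun w hw => (inv_pos.mpr (hden_pos w hw)).le)
    have hsub_nonneg : ∀ w ∈ s, 0 ≤ permS k t ((Equiv.swap 0 p a).pred (swap_pred_ne hp))
        (fun j => c (Equiv.swap 0 p j.succ)) (fun j => e (Equiv.swap 0 p j.succ)) w :=
      fun w hw => permS_nonneg _ _ _ (hpos' w hw)
    have hfac_pos : ∀ w ∈ s, 0 ≤ (c p + e p * w) * (((∑ i, c i) + (∑ i, e i) * w)⁻¹) :=
      fun w hw => (mul_pos (hnum_pos w hw) (inv_pos.mpr (hden_pos w hw))).le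
    constructor
    · refine convexOn_congr' (f := fun w => ((c p + e p * w) * (((∑ i, c i) + (∑ i, e i) * w)⁻¹)) *
        permS k t ((Equiv.swap 0 p a).pred (swap_pred_ne hp))
          (fun j => c (Equiv.swap 0 p j.succ)) (fun j => e (Equiv.swap 0 p j.succ)) w)
        ?_ (fun w _ => by rw [hfac_eq w])
      exact convexOn_mul_nonneg hs hfac_conv hconv' hfac_mono hmono' hfac_pos hsub_nonneg
    constructor
    · refine monotoneOn_congr' (f := fun w => ((c p + e p * w) * (((∑ i, c i) + (∑ i, e i) * w)⁻¹)) *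
        permS k t ((Equiv.swap 0 p a).pred (swap_pred_ne hp))
          (fun j => c (Equiv.swap 0 p j.succ)) (fun j => e (Equiv.swap 0 p j.succ)) w)
        ?_ (fun w _ => by rw [hfac_eq w])
      exact monotoneOn_mul_nonneg hfac_mono hmono' hfac_pos hsub_nonneg
    · intro w hw
      rw [hfac_eq w]
      exact mul_nonneg (hfac_pos w hw) (hsub_nonneg w hw)

lemma permS_props (hs : Convex ℝ s) :
    ∀ (t k : ℕ) (a : Fin k) (c e : Fin k → ℝ),
      (∀ w ∈ s, ∀ i, 0 < c i + e i * w) →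
      (∀ i, i ≠ a → 0 ≤ e i) → (∑ i, e i ≤ 0) →
      ConvexOn ℝ s (fun w => permS k t a c e w) ∧
        MonotoneOn (fun w => permS k t a c e w) s := by
  intro t
  induction t with
  | zero =>
      intro k a c e hpos he hE
      constructor
      · exact convexOn_congr' (convexOn_const 1 hs)
          (fun w hw => (permS_zero a c e w (hpos w hw)).symm)
      · exact monotoneOn_congr' (f := fun _ => (1:ℝ))
          (fun x _ y _ _ => le_refl 1)
          (fun w hw => (permS_zero a c e w (hpos w hw)).symm)
  | succ t ih =>
      intro k a c e hpos he hE
      match k with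
      | 0 => exact a.elim0
      | k + 1 =>
          have hterm := fun p => termF_props hs (fun k a c e h1 h2 h3 => ih k a c e h1 h2 h3)
            a c e p hpos he hE
          constructor
          · refine convexOn_congr' (f := fun w => ∑ p : Fin (k+1), termF k t a c e p w)
              (convexOn_finset_sum Finset.univ hs (fun p _ => (hterm p).1))
              (fun w _ => (permS_succ' a c e w).symm)
          · refine monotoneOn_congr' (f := fun w => ∑ p : Fin (k+1), termF k t a c e p w)
              (monotoneOn_finset_sum Finset.univ (fun p _ => (hterm p).2.1))
              (fun w _ => (permS_succ' a c e w).symm)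

lemma permS_pos (hs : Convex ℝ s) :
    ∀ (t k : ℕ) (a : Fin k) (c e : Fin k → ℝ),
      (∀ w ∈ s, ∀ i, 0 < c i + e i * w) → t < k →
      ∀ w ∈ s, 0 < permS k t a c e w := by
  intro t
  induction t with
  | zero =>
      intro k a c e hpos _ w hw
      rw [permS_zero a c e w (hpos w hw)]
      norm_num
  | succ t ih =>
      intro k a c e hpos htk w hw
      match k, htk with
      | k + 1, htk =>
          rw [permS_succ' a c e w]
          have hcard : 1 < Fintype.card (Fin (k+1)) := by
            simp only [Fintype.card_fin]; omega
          obtain ⟨p₀, hp₀⟩ := Fintype.exists_ne_of_one_lt_card hcard a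
          refine Finset.sum_pos' (fun p _ => ?_) ⟨p₀, Finset.mem_univ p₀, ?_⟩
          · -- nonnegativity of each term
            by_cases hp : p = a
            · simp [termF, dif_pos hp]
            · simp only [termF, dif_neg hp]
              have hden : 0 < ∑ i, (c i + e i * w) :=
                Finset.sum_pos (fun i _ => hpos w hw i) ⟨0, Finset.mem_univ 0⟩
              refine mul_nonneg (div_nonneg (hpos w hw p).le hden.le) ?_
              exact permS_nonneg _ _ _ (fun j => hpos w hw _)
          · simp only [termF, dif_neg hp₀]
            have hden : 0 < ∑ i, (c i + e i * w) :=
              Finset.sum_pos (fun i _ => hpos w hw i) ⟨0, Finset.mem_univ 0⟩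
            refine mul_pos (div_pos (hpos w hw p₀) hden) ?_
            exact ih k _ _ _ (fun w hw j => hpos w hw _) (by omega) w hw

end PermSProps
section PermSStrict

variable {s : Set ℝ}

/-- Auxiliary: after the bettor (slope `+1`) has been eliminated, the tail sums are
strictly decreasing in `w`, giving strict convexity. -/
lemma permS_strict_aux (hs : Convex ℝ s) (hsne : s.Nonempty) :
    ∀ (t k : ℕ), 1 ≤ t → t ≤ k - 1 → 2 ≤ k → ∀ (a : Fin k) (c e : Fin k → ℝ),
      (∀ w ∈ s, ∀ i, 0 < c i + e i * w) →
      (∀ i, i ≠ a → e i = 0) → (∑ i, e i < 0) →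
      StrictConvexOn ℝ s (fun w => permS k t a c e w) := by
  intro t k ht1 ht2 hk a c e hpos he hE
  match t, ht1 with
  | t + 1, _ =>
    match k, hk with
    | k + 1, hk =>
      have he' : ∀ i, i ≠ a → 0 ≤ e i := fun i hi => (he i hi).symm ▸ le_refl 0
      obtain ⟨q₀, hq₀⟩ : ∃ q₀ : Fin (k+1), q₀ ≠ a :=
        Fintype.exists_ne_of_one_lt_card (by simp only [Fintype.card_fin]; omega) a
      have hterm := fun p => termF_props hs
        (fun k' a' c' e' h1 h2 h3 => permS_props hs t k' a' c' e' h1 h2 h3)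
        a c e p hpos he' hE.le
      -- the strictly convex term at q₀
      have hsum_eq : ∀ w : ℝ, ∑ i, (c i + e i * w) = (∑ i, c i) + (∑ i, e i) * w := by
        intro w; rw [Finset.sum_add_distrib, ← Finset.sum_mul]
      have hden_pos : ∀ w ∈ s, 0 < (∑ i, c i) + (∑ i, e i) * w := by
        intro w hw
        rw [← hsum_eq w]
        exact Finset.sum_pos (fun i _ => hpos w hw i) ⟨0, Finset.mem_univ 0⟩
      have hcq : 0 < c q₀ := by
        obtain ⟨w₀, hw₀⟩ := hsne
        have := hpos w₀ hw₀ q₀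
        rw [he q₀ hq₀] at this
        simpa using this
      have hinv_strict : StrictConvexOn ℝ s (fun w => (((∑ i, c i) + (∑ i, e i) * w)⁻¹)) :=
        inv_affine_strictConvexOn hs hE.ne hden_pos
      have hfac_strict : StrictConvexOn ℝ s (fun w => c q₀ * (((∑ i, c i) + (∑ i, e i) * w)⁻¹)) :=
        strictConvexOn_smul_pos hcq hinv_strict
      have hfac_mono : MonotoneOn (fun w => c q₀ * (((∑ i, c i) + (∑ i, e i) * w)⁻¹)) s :=
        monotoneOn_mul_nonneg (fun x _ y _ _ => le_refl _) (inv_affine_monotoneOn hE.le hden_pos)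
          (fun w _ => hcq.le) (fun w hw => (inv_pos.mpr (hden_pos w hw)).le)
      have hfac_pos : ∀ w ∈ s, 0 < c q₀ * (((∑ i, c i) + (∑ i, e i) * w)⁻¹) :=
        fun w hw => mul_pos hcq (inv_pos.mpr (hden_pos w hw))
      obtain ⟨hpos', hes', hE'⟩ := sub_hyps (s := s) hq₀ hpos he' hE.le
      set a' := (Equiv.swap 0 q₀ a).pred (swap_pred_ne hq₀) with ha'
      set c' : Fin k → ℝ := fun j => c (Equiv.swap 0 q₀ j.succ) with hc'
      set e' : Fin k → ℝ := fun j => e (Equiv.swap 0 q₀ j.succ) with he''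
      obtain ⟨hsub_conv, hsub_mono⟩ := permS_props hs t k a' c' e' hpos' hes' hE'
      have hsub_pos : ∀ w ∈ s, 0 < permS k t a' c' e' w :=
        permS_pos hs t k a' c' e' hpos' (by omega)
      have hterm_strict : StrictConvexOn ℝ s (fun w => termF k t a c e q₀ w) := by
        have heq : ∀ w ∈ s, (c q₀ * (((∑ i, c i) + (∑ i, e i) * w)⁻¹)) * permS k t a' c' e' w
            = termF k t a c e q₀ w := by
          intro w _
          simp only [termF, dif_neg hq₀]
          rw [hsum_eq w, div_eq_mul_inv, he q₀ hq₀]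
          ring_nf
          rfl
        refine strictConvexOn_congr' ?_ heq
        exact strictConvexOn_mul_nonneg hs hfac_strict.convexOn hsub_conv hfac_mono hsub_mono
          hfac_pos hsub_pos (Or.inl hfac_strict)
      -- assemble
      have hsplit : ∀ w : ℝ, permS (k+1) (t+1) a c e w
          = termF k t a c e q₀ w + ∑ p ∈ Finset.univ.erase q₀, termF k t a c e p w := by
        intro w
        rw [permS_succ' a c e w, ← Finset.add_sum_erase Finset.univ _ (Finset.mem_univ q₀)]
      refine strictConvexOn_congr' (StrictConvexOn.add_convexOn hterm_strict
        (convexOn_finset_sum (Finset.univ.erase q₀) hs (fun p _ => (hterm p).1))) ?_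
      intro w _
      simp only [Pi.add_apply]
      exact (hsplit w).symm

/-- Strict convexity of the probability that player `a` finishes in (0-based) place `≥ t+1`,
as a function of the transfer `w`, when player `a` has slope `-1` and player `b` slope `+1`. -/
lemma permS_strictConvexOn (hs : Convex ℝ s) (hsne : s.Nonempty)
    {k t : ℕ} (hk : 3 ≤ k) (ht1 : 1 ≤ t) (ht2 : t ≤ k - 2)
    {a b : Fin k} (hba : b ≠ a) {c e : Fin k → ℝ}
    (hpos : ∀ w ∈ s, ∀ i, 0 < c i + e i * w)
    (hea : ∀ i, e i = (if i = a then (-1:ℝ) else 0) + (if i = b then 1 else 0)) :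
    StrictConvexOn ℝ s (fun w => permS k (t+1) a c e w) := by
  match k, hk with
  | k + 1, hk =>
    have hE : ∑ i, e i = 0 := by
      rw [Finset.sum_congr rfl (fun i _ => hea i), Finset.sum_add_distrib]
      simp [Finset.sum_ite_eq' Finset.univ]
    have he' : ∀ i, i ≠ a → 0 ≤ e i := by
      intro i hi
      rw [hea i, if_neg hi]
      by_cases hib : i = b <;> simp [hib]
    have heb : e b = 1 := by rw [hea b, if_neg hba, if_pos rfl]; ring
    have hterm := fun p => termF_props hs
      (fun k' a' c' e' h1 h2 h3 => permS_props hs t k' a' c' e' h1 h2 h3)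
      a c e p hpos he' hE.le
    have hsum_eq : ∀ w : ℝ, ∑ i, (c i + e i * w) = (∑ i, c i) + (∑ i, e i) * w := by
      intro w; rw [Finset.sum_add_distrib, ← Finset.sum_mul]
    have hden_pos : ∀ w ∈ s, 0 < (∑ i, c i) + (∑ i, e i) * w := by
      intro w hw
      rw [← hsum_eq w]
      exact Finset.sum_pos (fun i _ => hpos w hw i) ⟨0, Finset.mem_univ 0⟩
    -- properties of the factor at p = b
    have hnum_pos : ∀ w ∈ s, 0 < c b + e b * w := fun w hw => hpos w hw b
    have hnum_mono : MonotoneOn (fun w => c b + e b * w) s :=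
      affine_monotoneOn _ _ (he' b hba)
    have hfac_conv : ConvexOn ℝ s (fun w => (c b + e b * w) * (((∑ i, c i) + (∑ i, e i) * w)⁻¹)) :=
      convexOn_mul_nonneg hs (affine_convexOn hs _ _) (inv_affine_convexOn hs hden_pos)
        hnum_mono (inv_affine_monotoneOn hE.le hden_pos)
        (fun w hw => (hnum_pos w hw).le) (fun w hw => (inv_pos.mpr (hden_pos w hw)).le)
    have hfac_mono : MonotoneOn (fun w => (c b + e b * w) * (((∑ i, c i) + (∑ i, e i) * w)⁻¹)) s :=
      monotoneOn_mul_nonneg hnum_mono (inv_affine_monotoneOn hE.le hden_pos)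
        (fun w hw => (hnum_pos w hw).le) (fun w hw => (inv_pos.mpr (hden_pos w hw)).le)
    have hfac_pos : ∀ w ∈ s, 0 < (c b + e b * w) * (((∑ i, c i) + (∑ i, e i) * w)⁻¹) :=
      fun w hw => mul_pos (hnum_pos w hw) (inv_pos.mpr (hden_pos w hw))
    -- the reduced system after removing b
    obtain ⟨hpos', _, _⟩ := sub_hyps (s := s) hba hpos he' hE.le
    set a' := (Equiv.swap 0 b a).pred (swap_pred_ne hba) with ha'
    set c' : Fin k → ℝ := fun j => c (Equiv.swap 0 b j.succ) with hc'
    set e' : Fin k → ℝ := fun j => e (Equiv.swap 0 b j.succ) with he''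
    have hswapb : ∀ j : Fin k, Equiv.swap 0 b j.succ ≠ b := by
      intro j hj
      have : j.succ = (0 : Fin (k+1)) := by
        have := congrArg (Equiv.swap 0 b) hj
        rwa [Equiv.swap_apply_self, Equiv.swap_apply_right] at this
      exact (Fin.succ_ne_zero j) this
    have hswapa : ∀ j : Fin k, j ≠ a' → Equiv.swap 0 b j.succ ≠ a := by
      intro j hj hc
      apply hj
      have h2 : j.succ = Equiv.swap 0 b a := by
        have := congrArg (Equiv.swap 0 b) hc
        rwa [Equiv.swap_apply_self] at this
      refine Fin.succ_injective _ ?_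
      rw [ha', Fin.succ_pred]
      exact h2
    have hes' : ∀ j : Fin k, j ≠ a' → e' j = 0 := by
      intro j hj
      show e (Equiv.swap 0 b j.succ) = 0
      rw [hea, if_neg (hswapa j hj), if_neg (hswapb j)]
      ring
    have hE' : ∑ j, e' j < 0 := by
      have hsum := swap_zero_sum e b
      rw [hE] at hsum
      have : ∑ j : Fin k, e' j = -1 := by
        show ∑ j : Fin k, e (Equiv.swap 0 b j.succ) = -1
        linarith [heb, hsum]
      rw [this]; norm_num
    have hsub_strict : StrictConvexOn ℝ s (fun w => permS k t a' c' e' w) :=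
      permS_strict_aux hs hsne t k ht1 (by omega) (by omega) a' c' e' hpos' hes' hE'
    obtain ⟨hsub_conv, hsub_mono⟩ := permS_props hs t k a' c' e' hpos'
      (fun j hj => (hes' j hj).symm ▸ le_refl 0) hE'.le
    have hsub_pos : ∀ w ∈ s, 0 < permS k t a' c' e' w :=
      permS_pos hs t k a' c' e' hpos' (by omega)
    have hterm_strict : StrictConvexOn ℝ s (fun w => termF k t a c e b w) := by
      have heq : ∀ w ∈ s,
          ((c b + e b * w) * (((∑ i, c i) + (∑ i, e i) * w)⁻¹)) * permS k t a' c' e' w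
            = termF k t a c e b w := by
        intro w _
        simp only [termF, dif_neg hba]
        rw [hsum_eq w, div_eq_mul_inv]
      refine strictConvexOn_congr' ?_ heq
      exact strictConvexOn_mul_nonneg hs hfac_conv hsub_conv hfac_mono hsub_mono
        hfac_pos hsub_pos (Or.inr hsub_strict)
    have hsplit : ∀ w : ℝ, permS (k+1) (t+1) a c e w
        = termF k t a c e b w + ∑ p ∈ Finset.univ.erase b, termF k t a c e p w := by
      intro w
      rw [permS_succ' a c e w, ← Finset.add_sum_erase Finset.univ _ (Finset.mem_univ b)]
    refine strictConvexOn_congr' (StrictConvexOn.add_convexOn hterm_strict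
      (convexOn_finset_sum (Finset.univ.erase b) hs (fun p _ => (hterm p).1))) ?_
    intro w _
    simp only [Pi.add_apply]
    exact (hsplit w).symm

end PermSStrict
section Assemble

variable {s : Set ℝ}

lemma concaveOn_congr' {f g : ℝ → ℝ} (h : ConcaveOn ℝ s f) (heq : ∀ w ∈ s, f w = g w) :
    ConcaveOn ℝ s g := by
  refine ⟨h.1, fun x hx y hy a b ha hb hab => ?_⟩
  rw [← heq x hx, ← heq y hy, ← heq _ (h.1 hx hy ha hb hab)]
  exact h.2 hx hy ha hb hab

lemma strictConcaveOn_congr' {f g : ℝ → ℝ} (h : StrictConcaveOn ℝ s f)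
    (heq : ∀ w ∈ s, f w = g w) : StrictConcaveOn ℝ s g := by
  refine ⟨h.1, fun x hx y hy hxy a b ha hb hab => ?_⟩
  rw [← heq x hx, ← heq y hy, ← heq _ (h.1 hx hy ha.le hb.le hab)]
  exact h.2 hx hy hxy ha hb hab

lemma concaveOn_one_sub_scaled {S : ℝ → ℝ} {d : ℝ} (hd : 0 ≤ d)
    (hS : ConvexOn ℝ s S) : ConcaveOn ℝ s (fun w => d * (1 - S w)) := by
  refine ⟨hS.1, fun x hx y hy a b ha hb hab => ?_⟩
  have := hS.2 hx hy ha hb hab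
  simp only [smul_eq_mul] at *
  nlinarith [mul_le_mul_of_nonneg_left this hd]

lemma strictConcaveOn_one_sub_scaled {S : ℝ → ℝ} {d : ℝ} (hd : 0 < d)
    (hS : StrictConvexOn ℝ s S) : StrictConcaveOn ℝ s (fun w => d * (1 - S w)) := by
  refine ⟨hS.1, fun x hx y hy hxy a b ha hb hab => ?_⟩
  have := hS.2 hx hy hxy ha hb hab
  simp only [smul_eq_mul] at *
  nlinarith [mul_lt_mul_of_pos_left this hd]

/-- Abel-summation rewrite of the ICM expected value in terms of tail probabilities. -/
lemma icmEV_eq_abel {n : ℕ} (hn : 2 ≤ n) (m x : Fin n → ℝ) (e : Fin n → ℝ)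
    (a0 : Fin n) (w : ℝ)
    (hpos : ∀ i, 0 < x i + e i * w) (hsum1 : ∑ i, (x i + e i * w) = 1)
    (M : ℕ → ℝ) (hM : ∀ j : Fin n, m j = M (n-1) + ∑ t ∈ Finset.range (n-1),
      (if (j : ℕ) ≤ t then M t - M (t+1) else 0)) :
    icmEV m (fun i => x i + e i * w) a0
      = M (n-1) + ∑ t ∈ Finset.range (n-1),
          (M t - M (t+1)) * (1 - permS n (t+1) a0 x e w) := by
  have hP : ∀ σ : Equiv.Perm (Fin n),
      icmP (List.ofFn fun j => x (σ j) + e (σ j) * w)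
        = ordL (List.ofFn fun j => x (σ j) + e (σ j) * w) := by
    intro σ
    refine icmP_eq_ordL (fun v hv => ?_) ?_
    · rw [List.mem_ofFn] at hv
      obtain ⟨j, rfl⟩ := hv
      exact hpos _
    · rw [List.sum_ofFn, Equiv.sum_comp σ (fun i => x i + e i * w)]
      exact hsum1
  set P : Equiv.Perm (Fin n) → ℝ :=
    fun σ => ordL (List.ofFn fun j => x (σ j) + e (σ j) * w) with hPdef
  have hstep1 : icmEV m (fun i => x i + e i * w) a0 = ∑ σ : Equiv.Perm (Fin n), m (σ.symm a0) * P σ := by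
    rw [icmEV]
    exact Finset.sum_congr rfl fun σ _ => by rw [hP σ]
  rw [hstep1]
  have hall : ∑ σ : Equiv.Perm (Fin n), P σ = 1 := by
    have := permS_zero a0 x e w hpos
    rw [permS] at this
    rw [← this]
    apply Finset.sum_congr
    · rw [Finset.filter_true_of_mem (fun σ _ => Nat.zero_le _)]
    · exact fun σ _ => rfl
  have htail : ∀ t : ℕ, ∑ σ : Equiv.Perm (Fin n), (if t + 1 ≤ ((σ.symm a0 : Fin n) : ℕ) then P σ else 0)
      = permS n (t+1) a0 x e w := by
    intro t
    rw [permS, Finset.sum_filter]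
  calc ∑ σ : Equiv.Perm (Fin n), m (σ.symm a0) * P σ
      = ∑ σ : Equiv.Perm (Fin n), (M (n-1) * P σ
          + ∑ t ∈ Finset.range (n-1), (if ((σ.symm a0 : Fin n) : ℕ) ≤ t then (M t - M (t+1)) * P σ else 0)) := by
        refine Finset.sum_congr rfl fun σ _ => ?_
        rw [hM (σ.symm a0), add_mul, Finset.sum_mul]
        congr 1
        refine Finset.sum_congr rfl fun t _ => ?_
        rw [ite_mul, zero_mul]
    _ = M (n-1) * ∑ σ : Equiv.Perm (Fin n), P σ
        + ∑ t ∈ Finset.range (n-1), ∑ σ : Equiv.Perm (Fin n),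
            (if ((σ.symm a0 : Fin n) : ℕ) ≤ t then (M t - M (t+1)) * P σ else 0) := by
        rw [Finset.sum_add_distrib, ← Finset.mul_sum, Finset.sum_comm]
    _ = M (n-1) + ∑ t ∈ Finset.range (n-1),
          (M t - M (t+1)) * (1 - permS n (t+1) a0 x e w) := by
        rw [hall, mul_one]
        congr 1
        refine Finset.sum_congr rfl fun t _ => ?_
        have hsplit : ∀ σ : Equiv.Perm (Fin n),
            (if ((σ.symm a0 : Fin n) : ℕ) ≤ t then (M t - M (t+1)) * P σ else 0)
            = (M t - M (t+1)) * (P σ - (if t + 1 ≤ ((σ.symm a0 : Fin n) : ℕ) then P σ else 0)) := by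
          intro σ
          by_cases h : ((σ.symm a0 : Fin n) : ℕ) ≤ t
          · rw [if_pos h, if_neg (by omega)]
            ring
          · rw [if_neg h, if_pos (by omega)]
            ring
        rw [Finset.sum_congr rfl fun σ _ => hsplit σ, ← Finset.mul_sum,
          Finset.sum_sub_distrib, hall, htail t]

end Assemble

end ICMAux

/-- Theorem 1 (risk aversion): under the ICM, a fair bet between player 1 and
player 2 strictly lowers player 1's expected prize money, provided prizes are
nonincreasing and some player will not earn as much as second-place money. -/
theorem icm_fair_bet_lowers_expected_value
    {Ω : Type*} [MeasureSpace Ω] [IsProbabilityMeasure (ℙ : Measure Ω)]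
    (n : ℕ) (hn : 2 ≤ n)
    (x : Fin n → ℝ) (hx : ∀ i, 0 < x i) (hxsum : ∑ i, x i = 1)
    (m : Fin n → ℝ) (hm : ∀ i j : Fin n, i ≤ j → m j ≤ m i)
    (hm2 : m ⟨n - 1, by omega⟩ < m ⟨1, by omega⟩)
    (W : Ω → ℝ) (hWmeas : Measurable W) (hWfin : (Set.range W).Finite)
    (hWmean : ∫ ω, W ω = 0)
    (hWne : ℙ {ω | W ω = 0} < 1)
    (hWbound : ∀ᵐ ω ∂ℙ, -(x ⟨1, by omega⟩) < W ω ∧ W ω < x ⟨0, by omega⟩) :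
    ∫ ω, icmEV m
        (fun j => if j = ⟨0, by omega⟩ then x j - W ω
          else if j = ⟨1, by omega⟩ then x j + W ω else x j)
        ⟨0, by omega⟩
      < icmEV m x ⟨0, by omega⟩ := by
  classical
  rcases Nat.lt_or_ge n 3 with h3 | h3
  · -- n = 2 : hypotheses contradictory
    have hn2 : n = 2 := by omega
    subst hn2
    exact absurd hm2 (lt_irrefl _)
  -- main case : n ≥ 3
  set a0 : Fin n := ⟨0, by omega⟩ with ha0
  set a1 : Fin n := ⟨1, by omega⟩ with ha1
  have ha01 : a1 ≠ a0 := by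
    rw [ha0, ha1]
    intro h
    have h' : (1:ℕ) = 0 := congrArg Fin.val h
    exact absurd h' (by norm_num)
  set e : Fin n → ℝ := fun i => (if i = a0 then (-1:ℝ) else 0) + (if i = a1 then 1 else 0)
    with he
  set I : Set ℝ := Set.Ioo (-(x a1)) (x a0) with hI
  have hIopen : IsOpen I := by rw [hI]; exact isOpen_Ioo
  have hIconv : Convex ℝ I := by rw [hI]; exact convex_Ioo _ _
  have h0I : (0:ℝ) ∈ I := by
    rw [hI]
    exact ⟨neg_lt_zero.mpr (hx a1), hx a0⟩
  have hIne : I.Nonempty := ⟨0, h0I⟩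
  have hpos : ∀ w ∈ I, ∀ i, 0 < x i + e i * w := by
    intro w hw i
    rw [hI] at hw
    simp only [he]
    by_cases h0 : i = a0
    · rw [if_pos h0, if_neg (fun h1 => ha01 (h1.symm.trans h0))]
      have : x i = x a0 := by rw [h0]
      rw [this]
      have := hw.2
      nlinarith
    · rw [if_neg h0]
      by_cases h1 : i = a1
      · rw [if_pos h1]
        have : x i = x a1 := by rw [h1]
        rw [this]
        have := hw.1
        nlinarith
      · rw [if_neg h1]
        have := hx i
        nlinarith
  have hsum_e : ∑ i, e i = 0 := by
    rw [he, Finset.sum_add_distrib]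
    rw [Finset.sum_ite_eq' Finset.univ a0 (fun _ => (-1:ℝ)),
      Finset.sum_ite_eq' Finset.univ a1 (fun _ => (1:ℝ))]
    simp
  have hsum1 : ∀ w : ℝ, ∑ i, (x i + e i * w) = 1 := by
    intro w
    rw [Finset.sum_add_distrib, ← Finset.sum_mul, hsum_e, hxsum]
    ring
  -- prize ladder
  have hminlt : ∀ t : ℕ, min t (n-1) < n := fun t =>
    Nat.lt_of_le_of_lt (Nat.min_le_right _ _) (by omega)
  set M : ℕ → ℝ := fun t => m ⟨min t (n-1), hminlt t⟩ with hMdef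
  have hMj : ∀ j : Fin n, M (j : ℕ) = m j := by
    intro j
    simp only [hMdef]
    congr 1
    apply Fin.ext
    show min ((j:ℕ)) (n-1) = (j:ℕ)
    omega
  have hMmono : ∀ t, M (t+1) ≤ M t := by
    intro t
    simp only [hMdef]
    exact hm _ _ (by rw [Fin.le_def]; show min t (n-1) ≤ min (t+1) (n-1); omega)
  have hδ : ∀ t, 0 ≤ M t - M (t+1) := fun t => by linarith [hMmono t]
  have hM : ∀ j : Fin n, m j = M (n-1) + ∑ t ∈ Finset.range (n-1),
      (if (j : ℕ) ≤ t then M t - M (t+1) else 0) := by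
    intro j
    have h1 : ∑ t ∈ Finset.range (n-1), (if (j : ℕ) ≤ t then M t - M (t+1) else 0)
        = ∑ t ∈ Finset.Ico (j : ℕ) (n-1), (M t - M (t+1)) := by
      rw [← Finset.sum_filter]
      congr 1
      ext t
      simp only [Finset.mem_filter, Finset.mem_range, Finset.mem_Ico]
      omega
    have h2 : ∑ t ∈ Finset.Ico (j : ℕ) (n-1), (M t - M (t+1)) = M (j : ℕ) - M (n-1) := by
      rw [Finset.sum_Ico_eq_sub _ (by omega : (j : ℕ) ≤ n-1),
        Finset.sum_range_sub' M, Finset.sum_range_sub' M]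
      ring
    rw [h1, h2, hMj j]
    ring
  -- the expected-value function of the transfer
  set g : ℝ → ℝ := fun w => icmEV m
    (fun j => if j = a0 then x j - w else if j = a1 then x j + w else x j) a0 with hg
  have hfun_eq : ∀ w : ℝ,
      (fun j => if j = a0 then x j - w else if j = a1 then x j + w else x j)
        = fun i => x i + e i * w := by
    intro w
    funext j
    simp only [he]
    by_cases h0 : j = a0
    · rw [if_pos h0, if_pos h0, if_neg (fun h1 => ha01 (h1.symm.trans h0))]
      ring
    · rw [if_neg h0, if_neg h0]
      by_cases h1 : j = a1
      · rw [if_pos h1, if_pos h1]; ring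
      · rw [if_neg h1, if_neg h1]; ring
  set G : ℝ → ℝ := fun w => M (n-1) + ∑ t ∈ Finset.range (n-1),
      (M t - M (t+1)) * (1 - permS n (t+1) a0 x e w) with hG
  have hgG : ∀ w ∈ I, g w = G w := by
    intro w hw
    rw [hg]
    show icmEV m _ a0 = G w
    rw [hfun_eq w]
    rw [icmEV_eq_abel hn m x e a0 w (hpos w hw) (hsum1 w) M hM]
  -- choose a strictly profitable rank threshold
  obtain ⟨t₀, ht₀mem, ht₀pos⟩ : ∃ t₀ ∈ Finset.Ico 1 (n-1), 0 < M t₀ - M (t₀+1) := by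
    by_contra hcon
    push_neg at hcon
    have hsumle : ∑ t ∈ Finset.Ico 1 (n-1), (M t - M (t+1)) ≤ 0 := Finset.sum_nonpos hcon
    have heq : ∑ t ∈ Finset.Ico 1 (n-1), (M t - M (t+1)) = M 1 - M (n-1) := by
      rw [Finset.sum_Ico_eq_sub _ (by omega : 1 ≤ n-1),
        Finset.sum_range_sub' M, Finset.sum_range_sub' M]
      ring
    have hM1 : M 1 = m ⟨1, by omega⟩ := by
      simp only [hMdef]; congr 1; apply Fin.ext; show min 1 (n-1) = 1; omega
    have hMl : M (n-1) = m ⟨n-1, by omega⟩ := by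
      simp only [hMdef]; congr 1; apply Fin.ext; show min (n-1) (n-1) = n-1; omega
    rw [heq, hM1, hMl] at hsumle
    linarith
  obtain ⟨ht₀1, ht₀2⟩ := Finset.mem_Ico.mp ht₀mem
  -- convexity facts
  have hE0 : ∑ i, e i ≤ 0 := le_of_eq hsum_e
  have hee : ∀ i, i ≠ a0 → 0 ≤ e i := by
    intro i hi
    simp only [he]
    rw [if_neg hi]
    by_cases h1 : i = a1 <;> simp [h1]
  have hSconv : ∀ t : ℕ, ConvexOn ℝ I (fun w => permS n (t+1) a0 x e w) :=
    fun t => (permS_props hIconv (t+1) n a0 x e hpos hee hE0).1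
  have hSstrict : StrictConvexOn ℝ I (fun w => permS n (t₀+1) a0 x e w) :=
    permS_strictConvexOn hIconv hIne h3 ht₀1 (by omega) ha01 hpos (fun i => by simp only [he])
  have hGconc : StrictConcaveOn ℝ I G := by
    have hterm_strict : StrictConcaveOn ℝ I
        (fun w => (M t₀ - M (t₀+1)) * (1 - permS n (t₀+1) a0 x e w)) :=
      strictConcaveOn_one_sub_scaled ht₀pos hSstrict
    have hrest : ConcaveOn ℝ I (fun w => ∑ t ∈ (Finset.range (n-1)).erase t₀,
        (M t - M (t+1)) * (1 - permS n (t+1) a0 x e w)) :=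
      concaveOn_finset_sum _ hIconv
        (fun t _ => concaveOn_one_sub_scaled (hδ t) (hSconv t))
    have ht₀range : t₀ ∈ Finset.range (n-1) := Finset.mem_range.mpr (by omega)
    refine strictConcaveOn_congr' ((hterm_strict.add_concaveOn hrest).add_const (M (n-1))) ?_
    intro w _
    simp only [Pi.add_apply]
    rw [hG]
    show _ = M (n-1) + ∑ t ∈ Finset.range (n-1), (M t - M (t+1)) * (1 - permS n (t+1) a0 x e w)
    rw [← Finset.add_sum_erase (Finset.range (n-1)) _ ht₀range]
    ring
  have hgI : StrictConcaveOn ℝ I g :=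
    strictConcaveOn_congr' hGconc (fun w hw => (hgG w hw).symm)
  -- A closed interval inside I containing 0 and a.e. all values of W
  have hWI : ∀ᵐ ω ∂ℙ, W ω ∈ I := by
    filter_upwards [hWbound] with ω h
    rw [hI]
    exact ⟨h.1, h.2⟩
  set V : Set ℝ := insert 0 (Set.range W ∩ I) with hV
  have hVfin : V.Finite := (hWfin.inter_of_left I).insert 0
  have hVsub : V ⊆ I := by
    intro v hv
    rcases Set.mem_insert_iff.mp hv with h | h
    · rw [h]; exact h0I
    · exact h.2
  have hVne : hVfin.toFinset.Nonempty := ⟨0, by rw [Set.Finite.mem_toFinset, hV]; exact Set.mem_insert 0 _⟩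
  set A := hVfin.toFinset.min' hVne with hA
  set B := hVfin.toFinset.max' hVne with hB
  have hAI : A ∈ I := hVsub (hVfin.mem_toFinset.mp (hVfin.toFinset.min'_mem hVne))
  have hBI : B ∈ I := hVsub (hVfin.mem_toFinset.mp (hVfin.toFinset.max'_mem hVne))
  have hIccI : Set.Icc A B ⊆ I := by
    intro z hz
    rw [hI] at hAI hBI ⊢
    exact ⟨lt_of_lt_of_le hAI.1 hz.1, lt_of_le_of_lt hz.2 hBI.2⟩
  have hWs : ∀ᵐ ω ∂ℙ, W ω ∈ Set.Icc A B := by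
    filter_upwards [hWI] with ω h
    have hv : W ω ∈ V := by rw [hV]; exact Set.mem_insert_iff.mpr (Or.inr ⟨Set.mem_range_self ω, h⟩)
    exact ⟨Finset.min'_le _ _ (hVfin.mem_toFinset.mpr hv),
      Finset.le_max' _ _ (hVfin.mem_toFinset.mpr hv)⟩
  have hgIcc : StrictConcaveOn ℝ (Set.Icc A B) g := hgI.subset hIccI (convex_Icc A B)
  have hgcont : ContinuousOn g (Set.Icc A B) :=
    (hgI.concaveOn.continuousOn hIopen).mono hIccI
  -- integrability
  obtain ⟨C, hC⟩ : ∃ C : ℝ, ∀ ω, |W ω| ≤ C := by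
    obtain ⟨C, hC⟩ := (hWfin.image fun v => |v|).bddAbove
    exact ⟨C, fun ω => hC (Set.mem_image_of_mem _ (Set.mem_range_self ω))⟩
  have hWint : Integrable W ℙ := by
    refine Integrable.mono' (integrable_const C) hWmeas.aestronglyMeasurable
      (Filter.Eventually.of_forall fun ω => ?_)
    rw [Real.norm_eq_abs]
    exact hC ω
  have hpre : ∀ u : Set ℝ, MeasurableSet (W ⁻¹' u) := by
    intro u
    have h1 : W ⁻¹' u = ⋃ v ∈ (u ∩ Set.range W), W ⁻¹' {v} := by
      ext ω
      simp only [Set.mem_preimage, Set.mem_iUnion, Set.mem_inter_iff, Set.mem_singleton_iff]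
      constructor
      · intro h
        exact ⟨W ω, ⟨h, Set.mem_range_self ω⟩, rfl⟩
      · rintro ⟨v, ⟨hv, _⟩, hvW⟩
        rw [hvW]; exact hv
    rw [h1]
    exact MeasurableSet.biUnion ((hWfin.subset Set.inter_subset_right).countable)
      (fun v _ => hWmeas (measurableSet_singleton v))
  have hgWmeas : Measurable (fun ω => g (W ω)) := fun t _ => hpre (g ⁻¹' t)
  obtain ⟨C2, hC2⟩ : ∃ C : ℝ, ∀ ω, |g (W ω)| ≤ C := by
    obtain ⟨C, hC⟩ := ((hWfin.image g).image fun v => |v|).bddAbove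
    exact ⟨C, fun ω => hC (Set.mem_image_of_mem _
      (Set.mem_image_of_mem _ (Set.mem_range_self ω)))⟩
  have hgWint : Integrable (g ∘ W) ℙ := by
    refine Integrable.mono' (integrable_const C2) hgWmeas.aestronglyMeasurable
      (Filter.Eventually.of_forall fun ω => ?_)
    rw [Real.norm_eq_abs]
    exact hC2 ω
  -- Jensen
  rcases hgIcc.ae_eq_const_or_lt_map_average hgcont isClosed_Icc hWs hWint hgWint with
    hconst | hlt
  · exfalso
    rw [average_eq_integral, hWmean] at hconst
    have hae : ∀ᵐ ω ∂ℙ, W ω = 0 := by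
      filter_upwards [hconst] with ω h
      exact h
    have h1 : ℙ {ω | ¬ (W ω = 0)} = 0 := by
      rw [← MeasureTheory.ae_iff]
      exact hae
    have h2 : (1:ENNReal) ≤ ℙ {ω | W ω = 0} := by
      have huniv : (Set.univ : Set Ω) ⊆ {ω | W ω = 0} ∪ {ω | ¬ (W ω = 0)} := by
        intro ω _
        by_cases h : W ω = 0
        · exact Or.inl h
        · exact Or.inr h
      calc (1:ENNReal) = ℙ (Set.univ : Set Ω) := measure_univ.symm
        _ ≤ ℙ ({ω | W ω = 0} ∪ {ω | ¬ (W ω = 0)}) := measure_mono huniv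
        _ ≤ ℙ {ω | W ω = 0} + ℙ {ω | ¬ (W ω = 0)} := measure_union_le _ _
        _ = ℙ {ω | W ω = 0} := by rw [h1, add_zero]
    exact absurd hWne (not_lt.mpr h2)
  · rw [average_eq_integral, average_eq_integral, hWmean] at hlt
    have hg0 : g 0 = icmEV m x a0 := by
      rw [hg]
      show icmEV m _ a0 = icmEV m x a0
      congr 1
      funext j
      by_cases h0 : j = a0
      · rw [if_pos h0]; ring
      · rw [if_neg h0]
        by_cases h1 : j = a1
        · rw [if_pos h1]; ring
        · rw [if_neg h1]
    rw [hg0] at hlt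
    exact hlt
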